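/- arXiv:2208.04252 — 2 statements merged into one kernel-verified Lean document; each statement's English description precedes it below -/
import Mathlib

section
/- Let m ≥ 1/2 and let L ≥ 1 be a fixed integer. For each N > L, let W_{1,N}, …, W_{N,N} be i.i.d. real random variables, each with the normalized Gamma(m) distribution, and let T_N denote the top-L sum of (W_{1,N}, …, W_{N,N}). Then T_N divided by (L/m) log N converges to 1 in probability as N → ∞. -/
open MeasureTheory ProbabilityTheory Filter Real

/-- The top-`L` sum of the values `w 0, …, w (N-1)`: the maximum over subsets `S` of
cardinality `L` of `∑ n ∈ S, w n`, i.e. the sum of the `L` largest values. -/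
noncomputable def topSum {N : ℕ} (L : ℕ) (w : Fin N → ℝ) : ℝ :=
  sSup {x : ℝ | ∃ S : Finset (Fin N), S.card = L ∧ x = ∑ n ∈ S, w n}


open Set Filter MeasureTheory ProbabilityTheory
open scoped ENNReal NNReal

lemma topSum_set_eq {N L : ℕ} (w : Fin N → ℝ) :
    {x : ℝ | ∃ S : Finset (Fin N), S.card = L ∧ x = ∑ n ∈ S, w n} =
      ↑((Finset.univ.powersetCard L).image (fun S => ∑ n ∈ S, w n)) := by
  ext x
  simp only [Set.mem_setOf_eq, Finset.coe_image, Set.mem_image, Finset.mem_coe,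
    Finset.mem_powersetCard, Finset.subset_univ, true_and]
  constructor
  · rintro ⟨S, hS, rfl⟩; exact ⟨S, hS, rfl⟩
  · rintro ⟨S, hS, rfl⟩; exact ⟨S, hS, rfl⟩

lemma topSum_set_nonempty {N L : ℕ} (hLN : L ≤ N) (w : Fin N → ℝ) :
    {x : ℝ | ∃ S : Finset (Fin N), S.card = L ∧ x = ∑ n ∈ S, w n}.Nonempty := by
  obtain ⟨S, -, hS⟩ := Finset.exists_subset_card_eq (s := (Finset.univ : Finset (Fin N)))
    (n := L) (by simpa [Finset.card_univ] using hLN)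
  exact ⟨∑ n ∈ S, w n, S, hS, rfl⟩

lemma le_topSum {N L : ℕ} (w : Fin N → ℝ) {S : Finset (Fin N)} (hS : S.card = L) :
    ∑ n ∈ S, w n ≤ topSum L w := by
  apply le_csSup
  · rw [topSum_set_eq]; exact (Finset.image _ _).finite_toSet.bddAbove
  · exact ⟨S, hS, rfl⟩

lemma topSum_mem {N L : ℕ} (hLN : L ≤ N) (w : Fin N → ℝ) :
    ∃ S : Finset (Fin N), S.card = L ∧ topSum L w = ∑ n ∈ S, w n := by
  have := (topSum_set_nonempty hLN w).csSup_mem (by rw [topSum_set_eq]; exact (Finset.image _ _).finite_toSet)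
  exact this

lemma exists_ge_of_topSum_ge {N L : ℕ} (hL : 1 ≤ L) (hLN : L ≤ N) (w : Fin N → ℝ) {t : ℝ}
    (h : (L : ℝ) * t ≤ topSum L w) : ∃ n, t ≤ w n := by
  obtain ⟨S, hcard, heq⟩ := topSum_mem hLN w
  by_contra hc
  push_neg at hc
  have hne : S.Nonempty := Finset.card_pos.mp (by omega)
  have : ∑ n ∈ S, w n < ∑ _n ∈ S, t :=
    Finset.sum_lt_sum_of_nonempty hne (fun n _ => hc n)
  rw [Finset.sum_const, hcard, nsmul_eq_mul] at this
  linarith [heq ▸ h]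

lemma topSum_ge_of_card_le {N L : ℕ} (w : Fin N → ℝ) {s : ℝ} {F : Finset (Fin N)}
    (hF : L ≤ F.card) (hw : ∀ n ∈ F, s ≤ w n) : (L : ℝ) * s ≤ topSum L w := by
  obtain ⟨S, hSF, hScard⟩ := Finset.exists_subset_card_eq hF
  calc (L : ℝ) * s = ∑ _n ∈ S, s := by rw [Finset.sum_const, hScard, nsmul_eq_mul]
    _ ≤ ∑ n ∈ S, w n := Finset.sum_le_sum (fun n hn => hw n (hSF hn))
    _ ≤ topSum L w := le_topSum w hScard

lemma my_integral_exp_neg_mul_Ioi {b : ℝ} (hb : 0 < b) (t : ℝ) :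
    ∫ x in Set.Ioi t, Real.exp (-(b * x)) = Real.exp (-(b * t)) / b := by
  have hderiv : ∀ x ∈ Ici t, HasDerivAt (fun x => -Real.exp (-(b * x)) / b)
      (Real.exp (-(b * x))) x := by
    intro x _
    have h : HasDerivAt (fun x => -Real.exp (-(b * x)) / b)
        (-(Real.exp (-(b * x)) * -(b * 1)) / b) x :=
      (((hasDerivAt_id x).const_mul b).neg.exp.neg.div_const b)
    convert h using 1
    field_simp
  have hint : IntegrableOn (fun x => Real.exp (-(b * x))) (Ioi t) := by
    simpa only [neg_mul] using exp_neg_integrableOn_Ioi t hb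
  have htend : Tendsto (fun x => -Real.exp (-(b * x)) / b) atTop (nhds (-0 / b)) := by
    refine Tendsto.div_const (Tendsto.neg ?_) _
    exact Real.tendsto_exp_atBot.comp
      (by simpa [neg_mul] using tendsto_id.const_mul_atTop_of_neg (neg_neg_iff_pos.2 hb) (f := id))
  have := MeasureTheory.integral_Ioi_of_hasDerivAt_of_tendsto' hderiv hint htend
  rw [this]
  field_simp
  ring

lemma log_linear_bound (c δ : ℝ) (hδ : 0 < δ) :
    ∃ X : ℝ, 1 ≤ X ∧ ∀ x, X ≤ x → |c * Real.log x| ≤ δ * x := by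
  have h := (Real.isLittleO_log_id_atTop.const_mul_left c).def hδ
  rw [eventually_atTop] at h
  obtain ⟨X₀, hX₀⟩ := h
  refine ⟨max X₀ 1, le_max_right _ _, fun x hx => ?_⟩
  have h1 : (1:ℝ) ≤ x := le_trans (le_max_right _ _) hx
  have := hX₀ x (le_trans (le_max_left _ _) hx)
  rw [abs_mul]
  simpa [abs_of_nonneg (by linarith : (0:ℝ) ≤ x)] using this

lemma gamma_tail_upper {m δ : ℝ} (hm : 0 < m) (hδ : 0 < δ) (hδm : δ < m) :
    ∃ C, 0 < C ∧ ∃ T : ℝ, 1 ≤ T ∧ ∀ t, T ≤ t →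
      ProbabilityTheory.gammaMeasure m m (Set.Ici t) ≤
        ENNReal.ofReal (C * Real.exp (-((m - δ) * t))) := by
  obtain ⟨X, hX1, hX⟩ := log_linear_bound (m - 1) δ hδ
  have hΓ : 0 < Real.Gamma m := Real.Gamma_pos_of_pos hm
  set K : ℝ := m ^ m / Real.Gamma m with hK
  have hKpos : 0 < K := by positivity
  refine ⟨K / (m - δ), div_pos hKpos (by linarith), X, hX1, fun t ht => ?_⟩
  have ht0 : (0:ℝ) < t := lt_of_lt_of_le (by linarith) ht
  have key : ∀ x ∈ Ici t, ProbabilityTheory.gammaPDF m m x ≤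
      ENNReal.ofReal (K * Real.exp (-((m - δ) * x))) := by
    intro x hx
    have hxt : t ≤ x := hx
    have hx0 : (0:ℝ) < x := lt_of_lt_of_le ht0 hxt
    rw [ProbabilityTheory.gammaPDF_of_nonneg hx0.le]
    apply ENNReal.ofReal_le_ofReal
    have hrpow : x ^ (m - 1) = Real.exp ((m - 1) * Real.log x) := by
      rw [Real.rpow_def_of_pos hx0, mul_comm]
    have hlog : (m - 1) * Real.log x ≤ δ * x :=
      le_trans (le_abs_self _) (hX x (le_trans ht hxt))
    rw [hrpow, mul_assoc, ← Real.exp_add]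
    rw [← hK]
    have : Real.exp ((m-1) * Real.log x + -(m * x)) ≤ Real.exp (-((m - δ) * x)) := by
      apply Real.exp_le_exp.mpr; nlinarith
    exact mul_le_mul_of_nonneg_left this hKpos.le
  calc ProbabilityTheory.gammaMeasure m m (Set.Ici t)
      = ∫⁻ x in Ici t, ProbabilityTheory.gammaPDF m m x :=
        withDensity_apply _ measurableSet_Ici
    _ ≤ ∫⁻ x in Ici t, ENNReal.ofReal (K * Real.exp (-((m - δ) * x))) :=
        setLIntegral_mono (by fun_prop) key
    _ = ENNReal.ofReal (∫ x in Ici t, K * Real.exp (-((m - δ) * x))) := by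
        rw [MeasureTheory.ofReal_integral_eq_lintegral_ofReal]
        · refine Integrable.const_mul ?_ K
          have : IntegrableOn (fun x => Real.exp (-((m - δ) * x))) (Ici t) := by
            rw [integrableOn_Ici_iff_integrableOn_Ioi]
            simpa only [neg_mul] using exp_neg_integrableOn_Ioi t (by linarith : (0:ℝ) < m - δ)
          exact this
        · exact ae_of_all _ fun x => by positivity
    _ = ENNReal.ofReal (K / (m - δ) * Real.exp (-((m - δ) * t))) := by
        rw [integral_Ici_eq_integral_Ioi, MeasureTheory.integral_const_mul,
          my_integral_exp_neg_mul_Ioi (by linarith : (0:ℝ) < m - δ)]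
        ring_nf

lemma gamma_tail_lower {m δ : ℝ} (hm : 0 < m) (hδ : 0 < δ) :
    ∃ c, 0 < c ∧ ∃ T : ℝ, 1 ≤ T ∧ ∀ t, T ≤ t →
      ENNReal.ofReal (c * Real.exp (-((m + δ) * t))) ≤
        ProbabilityTheory.gammaMeasure m m (Set.Ici t) := by
  obtain ⟨X, hX1, hX⟩ := log_linear_bound (m - 1) δ hδ
  have hΓ : 0 < Real.Gamma m := Real.Gamma_pos_of_pos hm
  set K : ℝ := m ^ m / Real.Gamma m with hK
  have hKpos : 0 < K := by positivity
  refine ⟨K * Real.exp (-(m + δ)), by positivity, X, hX1, fun t ht => ?_⟩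
  have ht0 : (0:ℝ) < t := lt_of_lt_of_le (by linarith) ht
  have key : ∀ x ∈ Icc t (t+1),
      ENNReal.ofReal (K * Real.exp (-(m + δ)) * Real.exp (-((m + δ) * t))) ≤
      ProbabilityTheory.gammaPDF m m x := by
    intro x hx
    have hx0 : (0:ℝ) < x := lt_of_lt_of_le ht0 hx.1
    rw [ProbabilityTheory.gammaPDF_of_nonneg hx0.le]
    apply ENNReal.ofReal_le_ofReal
    have hrpow : x ^ (m - 1) = Real.exp ((m - 1) * Real.log x) := by
      rw [Real.rpow_def_of_pos hx0, mul_comm]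
    have hlog : -(δ * x) ≤ (m - 1) * Real.log x :=
      neg_le_of_abs_le (hX x (le_trans ht hx.1))
    rw [hrpow, mul_assoc, ← Real.exp_add, mul_assoc, ← Real.exp_add, ← hK]
    refine mul_le_mul_of_nonneg_left (Real.exp_le_exp.mpr ?_) hKpos.le
    nlinarith [hx.2]
  calc ENNReal.ofReal (K * Real.exp (-(m + δ)) * Real.exp (-((m + δ) * t)))
      = ∫⁻ _x in Icc t (t+1),
          ENNReal.ofReal (K * Real.exp (-(m + δ)) * Real.exp (-((m + δ) * t))) := by
        rw [setLIntegral_const, Real.volume_Icc]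
        norm_num
    _ ≤ ∫⁻ x in Icc t (t+1), ProbabilityTheory.gammaPDF m m x :=
        setLIntegral_mono (by
          exact (ProbabilityTheory.measurable_gammaPDFReal m m).ennreal_ofReal) key
    _ = ProbabilityTheory.gammaMeasure m m (Icc t (t+1)) :=
        (withDensity_apply _ measurableSet_Icc).symm
    _ ≤ ProbabilityTheory.gammaMeasure m m (Set.Ici t) :=
        measure_mono Icc_subset_Ici_self

lemma nat_log_atTop : Tendsto (fun N : ℕ => Real.log N) atTop atTop :=
  Real.tendsto_log_atTop.comp tendsto_natCast_atTop_atTop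

lemma aux_tendsto1 (C : ℝ) {β : ℝ} (hβ : β < 0) :
    Tendsto (fun N : ℕ => C * Real.exp (β * Real.log N)) atTop (nhds 0) := by
  have h : Tendsto (fun N : ℕ => β * Real.log N) atTop atBot :=
    (tendsto_const_mul_atBot_of_neg hβ).mpr nat_log_atTop
  simpa using (Real.tendsto_exp_atBot.comp h).const_mul C

lemma aux_tendsto2 (A : ℝ) {c κ : ℝ} (hc : 0 < c) (hκ : 0 < κ) :
    Tendsto (fun N : ℕ => Real.exp (A * Real.log N - c * Real.exp (κ * Real.log N)))
      atTop (nhds 0) := by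
  have hmain : Tendsto (fun u : ℝ => A * u - c * Real.exp (κ * u)) atTop atBot := by
    have h1 : Tendsto (fun u : ℝ => Real.exp (κ * u) / u) atTop atTop := by
      have h0 : Tendsto (fun u : ℝ => Real.exp (κ * u) / (κ * u)) atTop atTop := by
        have := (Real.tendsto_exp_div_pow_atTop 1).comp
          ((tendsto_const_mul_atTop_of_pos hκ).mpr (tendsto_id (α := ℝ)))
        simpa [Function.comp_def] using this
      have := (tendsto_const_mul_atTop_of_pos hκ).mpr h0
      apply this.congr'
      filter_upwards [eventually_gt_atTop (0:ℝ)] with u hu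
      field_simp
    have h2 : Tendsto (fun u : ℝ => A - c * (Real.exp (κ * u) / u)) atTop atBot := by
      apply tendsto_atBot_add_const_left
      exact (tendsto_const_mul_atBot_of_neg (by linarith : -c < 0)).mpr h1 |>.congr
        (fun u => by ring)
    have h3 := (tendsto_id (α := ℝ)).atTop_mul_atBot₀ h2
    apply h3.congr'
    filter_upwards [eventually_gt_atTop (0:ℝ)] with u hu
    field_simp
    rfl
  exact Real.tendsto_exp_atBot.comp (hmain.comp nat_log_atTop)

set_option maxHeartbeats 1000000 in
lemma stmt4_aux
    (m : ℝ) (hm : 1 / 2 ≤ m)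
    (L : ℕ) (hL : 1 ≤ L)
    (Ω : ℕ → Type) [∀ N, MeasurableSpace (Ω N)]
    (P : ∀ N, Measure (Ω N)) [∀ N, IsProbabilityMeasure (P N)]
    (W : ∀ N : ℕ, Fin N → Ω N → ℝ)
    (hmeas : ∀ N : ℕ, L < N → ∀ n : Fin N, Measurable (W N n))
    (hindep : ∀ N : ℕ, L < N →
      iIndepFun (W N) (P N))
    (hdist : ∀ N : ℕ, L < N → ∀ n : Fin N,
      (P N).map (W N n) = gammaMeasure m m)
    (ε : ℝ) (hε : 0 < ε) (hε2 : ε ≤ 1/2) :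
    Tendsto
        (fun N : ℕ =>
          (P N) {ω | ε ≤
            |topSum L (fun n => W N n ω) / (((L : ℝ) / m) * Real.log N) - 1|})
        atTop (nhds 0) := by
  have hm0 : (0:ℝ) < m := by linarith
  set δ := m * ε / 8 with hδdef
  have hδ : 0 < δ := by positivity
  have hδm : δ < m := by nlinarith
  obtain ⟨C, hC, T₁, hT₁, hupper⟩ := gamma_tail_upper hm0 hδ hδm
  obtain ⟨c, hc, T₂, hT₂, hlower⟩ := gamma_tail_lower hm0 hδ
  set γ₁ := (m - δ) * (1 + ε) / m with hγ₁
  set γ₂ := (m + δ) * (1 - ε/2) / m with hγ₂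
  have hγ₁gt : 1 < γ₁ := by rw [hγ₁, hδdef, lt_div_iff₀ hm0]; nlinarith
  have hγ₂lt : γ₂ ≤ 1 - 3*ε/8 := by rw [hγ₂, hδdef, div_le_iff₀ hm0]; nlinarith
  set κ := 3*ε/8 with hκdef
  have hκ : 0 < κ := by positivity
  set b : ℕ → ℝ := fun N =>
    C * Real.exp ((1 - γ₁) * Real.log N)
    + Real.exp (((L:ℝ) - 1) * Real.log N - c/2 * Real.exp (κ * Real.log N)) with hbdef
  have hbtendsto : Tendsto b atTop (nhds 0) := by
    have := (aux_tendsto1 C (by linarith : 1 - γ₁ < 0)).add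
      (aux_tendsto2 ((L:ℝ)-1) (by positivity : (0:ℝ) < c/2) hκ)
    simpa using this
  have hbound : ∀ᶠ N : ℕ in atTop,
      (P N) {ω | ε ≤
        |topSum L (fun n => W N n ω) / (((L : ℝ) / m) * Real.log N) - 1|}
      ≤ ENNReal.ofReal (b N) := by
    have h1ε : (0:ℝ) < 1 + ε := by linarith
    have h2ε : (0:ℝ) < 1 - ε/2 := by linarith
    filter_upwards [nat_log_atTop.eventually_ge_atTop
        (max 1 (max (m * T₁ / (1+ε)) (m * T₂ / (1-ε/2)))),
      eventually_ge_atTop (2*L + 2)] with N hlogN hNge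
    have hN1 : L < N := by omega
    have hNpos : (0:ℝ) < N := by
      have : 0 < N := by omega
      exact_mod_cast this
    have hlog1 : (1:ℝ) ≤ Real.log N := le_trans (le_max_left _ _) hlogN
    have hNexp : (N:ℝ) = Real.exp (Real.log N) := (Real.exp_log hNpos).symm
    set t := (1+ε) * Real.log N / m with htdef
    set s := (1-ε/2) * Real.log N / m with hsdef
    set a := ((L:ℝ)/m) * Real.log N with hadef
    have hLpos : (0:ℝ) < L := by exact_mod_cast hL
    have ha : 0 < a := by
      apply mul_pos (div_pos hLpos hm0); linarith
    have hT1t : T₁ ≤ t := by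
      have h0 : m * T₁ / (1+ε) ≤ Real.log N :=
        le_trans (le_trans (le_max_left _ _) (le_max_right _ _)) hlogN
      rw [div_le_iff₀ h1ε] at h0
      rw [htdef, le_div_iff₀ hm0]
      nlinarith
    have hT2s : T₂ ≤ s := by
      have h0 : m * T₂ / (1-ε/2) ≤ Real.log N :=
        le_trans (le_trans (le_max_right _ _) (le_max_right _ _)) hlogN
      rw [div_le_iff₀ h2ε] at h0
      rw [hsdef, le_div_iff₀ hm0]
      nlinarith
    set k := N - L + 1 with hkdef
    have hkL : k + L = N + 1 := by omega
    have hkcast : (k:ℝ) = (N:ℝ) - L + 1 := by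
      rw [hkdef]
      push_cast [Nat.cast_sub (by omega : L ≤ N)]
      ring
    set A := ⋃ n : Fin N, {ω : Ω N | t ≤ W N n ω} with hAdef
    set B := ⋃ S ∈ Finset.powersetCard k (Finset.univ : Finset (Fin N)),
      ⋂ n ∈ S, {ω : Ω N | W N n ω < s} with hBdef
    have hsub : {ω | ε ≤
        |topSum L (fun n => W N n ω) / (((L : ℝ) / m) * Real.log N) - 1|} ⊆ A ∪ B := by
      intro ω hω
      rw [Set.mem_setOf_eq, ← hadef] at hω
      rcases le_abs.mp hω with h | h
      · -- upper deviation
        have h3 : (1+ε) * a ≤ topSum L (fun n => W N n ω) := by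
          have := (le_div_iff₀ ha).mp (by linarith :
            1 + ε ≤ topSum L (fun n => W N n ω) / a)
          linarith
        have heq : (L:ℝ) * t = (1+ε) * a := by
          rw [htdef, hadef]; field_simp
        obtain ⟨n, hn⟩ := exists_ge_of_topSum_ge hL (le_of_lt hN1)
          (fun n => W N n ω) (by linarith : (L:ℝ) * t ≤ topSum L (fun n => W N n ω))
        exact Or.inl (Set.mem_iUnion.mpr ⟨n, hn⟩)
      · -- lower deviation
        have h3 : topSum L (fun n => W N n ω) ≤ (1-ε) * a := by
          have := (div_le_iff₀ ha).mp (by linarith :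
            topSum L (fun n => W N n ω) / a ≤ 1 - ε)
          linarith
        right
        set F := Finset.univ.filter (fun n : Fin N => s ≤ W N n ω) with hF
        have hFcard : F.card < L := by
          by_contra hcon
          push_neg at hcon
          have hts := topSum_ge_of_card_le (fun n => W N n ω) hcon
            (fun n hn => (Finset.mem_filter.mp hn).2)
          have heqs : (L:ℝ) * s = (1 - ε/2) * a := by
            rw [hsdef, hadef]; field_simp
          nlinarith
        have hcompl : k ≤ Fᶜ.card := by
          rw [Finset.card_compl, Fintype.card_fin]
          omega
        obtain ⟨S, hSsub, hScard⟩ := Finset.exists_subset_card_eq hcompl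
        refine Set.mem_biUnion (Finset.mem_powersetCard.mpr
          ⟨Finset.subset_univ S, hScard⟩) ?_
        refine Set.mem_iInter₂.mpr fun n hn => ?_
        have h4 := hSsub hn
        rw [Finset.mem_compl, hF] at h4
        simp only [Finset.mem_filter, Finset.mem_univ, true_and, not_le] at h4
        exact h4
    -- probability of A
    have hA : P N A ≤ ENNReal.ofReal (C * Real.exp ((1-γ₁) * Real.log N)) := by
      have h1 : ∀ n : Fin N, P N {ω : Ω N | t ≤ W N n ω}
          ≤ ENNReal.ofReal (C * Real.exp (-((m - δ) * t))) := by
        intro n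
        have hpre : {ω : Ω N | t ≤ W N n ω} = W N n ⁻¹' (Ici t) := rfl
        rw [hpre, ← Measure.map_apply (hmeas N hN1 n) measurableSet_Ici, hdist N hN1 n]
        exact hupper t hT1t
      calc P N A ≤ ∑ n : Fin N, P N {ω : Ω N | t ≤ W N n ω} :=
            measure_iUnion_fintype_le _ _
        _ ≤ ∑ _n : Fin N, ENNReal.ofReal (C * Real.exp (-((m-δ)*t))) :=
            Finset.sum_le_sum (fun n _ => h1 n)
        _ = (N : ℝ≥0∞) * ENNReal.ofReal (C * Real.exp (-((m-δ)*t))) := by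
            rw [Finset.sum_const, Finset.card_univ, Fintype.card_fin, nsmul_eq_mul]
        _ = ENNReal.ofReal ((N:ℝ) * (C * Real.exp (-((m-δ)*t)))) := by
            rw [ENNReal.ofReal_mul (Nat.cast_nonneg N), ENNReal.ofReal_natCast]
        _ = ENNReal.ofReal (C * Real.exp ((1-γ₁) * Real.log N)) := by
            congr 1
            have hexp : (N:ℝ) * (C * Real.exp (-((m-δ)*t)))
                = C * Real.exp (Real.log N + -((m-δ)*t)) := by
              rw [Real.exp_add, ← hNexp]; ring
            rw [hexp]
            congr 1
            rw [htdef, hγ₁]; field_simp; ring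
    -- probability of B
    haveI hPG : IsProbabilityMeasure (gammaMeasure m m) :=
      isProbabilityMeasure_gammaMeasure hm0 hm0
    set p := gammaMeasure m m (Ici s) with hpdef
    have hp_le : p ≤ 1 := prob_le_one
    have hp_ne : p ≠ ⊤ := lt_of_le_of_lt hp_le ENNReal.one_lt_top |>.ne
    set pR := p.toReal with hpRdef
    have hpR0 : 0 ≤ pR := ENNReal.toReal_nonneg
    have hplo : c * Real.exp (-((m+δ)*s)) ≤ pR := by
      have h0 := hlower s hT2s
      calc c * Real.exp (-((m+δ)*s))
          = (ENNReal.ofReal (c * Real.exp (-((m+δ)*s)))).toReal :=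
            (ENNReal.toReal_ofReal (by positivity)).symm
        _ ≤ pR := ENNReal.toReal_mono hp_ne h0
    have hr_eq : gammaMeasure m m (Iio s) = ENNReal.ofReal (1 - pR) := by
      rw [show Iio s = (Ici s)ᶜ from (compl_Ici (a := s)).symm,
        prob_compl_eq_one_sub measurableSet_Ici, ← hpdef,
        ← ENNReal.ofReal_toReal (a := 1 - p)
          (ENNReal.sub_ne_top ENNReal.one_ne_top),
        ENNReal.toReal_sub_of_le hp_le ENNReal.one_ne_top]
      simp
      rfl
    have hr_le : gammaMeasure m m (Iio s) ≤ ENNReal.ofReal (Real.exp (-pR)) := by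
      rw [hr_eq]
      exact ENNReal.ofReal_le_ofReal (by linarith [Real.add_one_le_exp (-pR)])
    have hBeach : ∀ S ∈ Finset.powersetCard k (Finset.univ : Finset (Fin N)),
        P N (⋂ n ∈ S, {ω : Ω N | W N n ω < s})
          ≤ ENNReal.ofReal (Real.exp (-(pR * k))) := by
      intro S hS
      have hScard := (Finset.mem_powersetCard.mp hS).2
      have heq : P N (⋂ n ∈ S, {ω : Ω N | W N n ω < s})
          = ∏ n ∈ S, P N {ω : Ω N | W N n ω < s} :=
        (hindep N hN1).meas_biInter (fun n _ => ⟨Iio s, measurableSet_Iio, rfl⟩)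
      rw [heq]
      have heach : ∀ n : Fin N, P N {ω : Ω N | W N n ω < s}
          ≤ ENNReal.ofReal (Real.exp (-pR)) := by
        intro n
        have hpre : {ω : Ω N | W N n ω < s} = W N n ⁻¹' (Iio s) := rfl
        rw [hpre, ← Measure.map_apply (hmeas N hN1 n) measurableSet_Iio, hdist N hN1 n]
        exact hr_le
      calc ∏ n ∈ S, P N {ω : Ω N | W N n ω < s}
          ≤ ∏ _n ∈ S, ENNReal.ofReal (Real.exp (-pR)) :=
            Finset.prod_le_prod' (fun n _ => heach n)
        _ = ENNReal.ofReal (Real.exp (-pR)) ^ k := by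
            rw [Finset.prod_const, hScard]
        _ = ENNReal.ofReal (Real.exp (-pR) ^ k) :=
            (ENNReal.ofReal_pow (by positivity) k).symm
        _ = ENNReal.ofReal (Real.exp (-(pR * k))) := by
            rw [← Real.exp_nat_mul]
            congr 1
            ring
    have hchoose : (N.choose k : ℝ≥0∞) ≤ ((N:ℝ≥0∞)) ^ (L-1) := by
      have h0 : N.choose k ≤ N ^ (L-1) := by
        rw [show k = N - (L-1) by omega, Nat.choose_symm (by omega)]
        exact Nat.choose_le_pow _ _
      exact_mod_cast h0
    have hB : P N B ≤ ENNReal.ofReal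
        (Real.exp (((L:ℝ) - 1) * Real.log N - c/2 * Real.exp (κ * Real.log N))) := by
      have hNhalf : (N:ℝ)/2 ≤ (k:ℝ) := by
        have h2L : (2*L : ℝ) ≤ (N:ℝ) := by exact_mod_cast (by omega : 2*L ≤ N)
        rw [hkcast]; linarith
      have hfinal : ((N:ℝ)) ^ (L-1) * Real.exp (-(pR * k)) ≤
          Real.exp (((L:ℝ) - 1) * Real.log N - c/2 * Real.exp (κ * Real.log N)) := by
        have hNpow : ((N:ℝ)) ^ (L-1) = Real.exp (((L:ℝ) - 1) * Real.log N) := by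
          rw [show ((L:ℝ) - 1) = ((L-1 : ℕ) : ℝ) by push_cast [Nat.cast_sub hL]; ring,
            Real.exp_nat_mul, ← hNexp]
        have hexp_le : pR * k ≥ c/2 * Real.exp (κ * Real.log N) := by
          have hs_eq : (m+δ)*s = γ₂ * Real.log N := by
            rw [hsdef, hγ₂]; field_simp
          have hpl : c * Real.exp (-(γ₂ * Real.log N)) ≤ pR := by
            rw [← hs_eq]; exact_mod_cast hplo
          have hkpos : (0:ℝ) ≤ (k:ℝ) := Nat.cast_nonneg k
          have h01 : c * Real.exp (-(γ₂ * Real.log N)) * ((N:ℝ)/2) ≤ pR * k := by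
            apply mul_le_mul hpl hNhalf (by positivity) hpR0
          have h02 : c/2 * Real.exp (κ * Real.log N)
              ≤ c * Real.exp (-(γ₂ * Real.log N)) * ((N:ℝ)/2) := by
            have hRHS : c/2 * Real.exp ((1-γ₂) * Real.log N)
                = c * Real.exp (-(γ₂ * Real.log N)) * ((N:ℝ)/2) := by
              rw [show (1-γ₂) * Real.log N = -(γ₂ * Real.log N) + Real.log N by ring,
                Real.exp_add, ← hNexp]
              ring
            rw [← hRHS]
            exact mul_le_mul_of_nonneg_left (Real.exp_le_exp.mpr
              (mul_le_mul_of_nonneg_right (by linarith) (by linarith))) (by positivity)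
          linarith
        calc ((N:ℝ)) ^ (L-1) * Real.exp (-(pR * k))
            ≤ ((N:ℝ)) ^ (L-1) * Real.exp (-(c/2 * Real.exp (κ * Real.log N))) := by
              apply mul_le_mul_of_nonneg_left (Real.exp_le_exp.mpr (by linarith))
                (by positivity)
          _ = Real.exp (((L:ℝ) - 1) * Real.log N - c/2 * Real.exp (κ * Real.log N)) := by
              rw [hNpow, ← Real.exp_add]
              ring_nf
      calc P N B ≤ ∑ S ∈ Finset.powersetCard k (Finset.univ : Finset (Fin N)),
            P N (⋂ n ∈ S, {ω : Ω N | W N n ω < s}) := measure_biUnion_finset_le _ _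
        _ ≤ ∑ _S ∈ Finset.powersetCard k (Finset.univ : Finset (Fin N)),
            ENNReal.ofReal (Real.exp (-(pR * k))) := Finset.sum_le_sum hBeach
        _ = (N.choose k : ℝ≥0∞) * ENNReal.ofReal (Real.exp (-(pR * k))) := by
            rw [Finset.sum_const, Finset.card_powersetCard, Finset.card_univ,
              Fintype.card_fin, nsmul_eq_mul]
        _ ≤ ((N:ℝ≥0∞)) ^ (L-1) * ENNReal.ofReal (Real.exp (-(pR * k))) :=
            mul_le_mul_left hchoose _
        _ = ENNReal.ofReal (((N:ℝ)) ^ (L-1) * Real.exp (-(pR * k))) := by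
            rw [ENNReal.ofReal_mul (by positivity), ← ENNReal.ofReal_natCast N,
              ← ENNReal.ofReal_pow (Nat.cast_nonneg N)]
        _ ≤ ENNReal.ofReal
            (Real.exp (((L:ℝ) - 1) * Real.log N - c/2 * Real.exp (κ * Real.log N))) :=
            ENNReal.ofReal_le_ofReal hfinal
    calc (P N) {ω | ε ≤
          |topSum L (fun n => W N n ω) / (((L : ℝ) / m) * Real.log N) - 1|}
        ≤ P N (A ∪ B) := measure_mono hsub
      _ ≤ P N A + P N B := measure_union_le _ _
      _ ≤ ENNReal.ofReal (C * Real.exp ((1-γ₁) * Real.log N))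
          + ENNReal.ofReal
            (Real.exp (((L:ℝ) - 1) * Real.log N - c/2 * Real.exp (κ * Real.log N))) :=
          add_le_add hA hB
      _ = ENNReal.ofReal (b N) := by
          rw [hbdef, ← ENNReal.ofReal_add (by positivity) (by positivity)]
  refine tendsto_of_tendsto_of_tendsto_of_le_of_le' tendsto_const_nhds
    ?_ (Eventually.of_forall fun N => zero_le) hbound
  have := ENNReal.tendsto_ofReal hbtendsto
  simpa using this

theorem stmt4
    (m : ℝ) (hm : 1 / 2 ≤ m)
    (L : ℕ) (hL : 1 ≤ L)
    (Ω : ℕ → Type) [∀ N, MeasurableSpace (Ω N)]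
    (P : ∀ N, Measure (Ω N)) [∀ N, IsProbabilityMeasure (P N)]
    (W : ∀ N : ℕ, Fin N → Ω N → ℝ)
    (hmeas : ∀ N : ℕ, L < N → ∀ n : Fin N, Measurable (W N n))
    (hindep : ∀ N : ℕ, L < N →
      iIndepFun (W N) (P N))
    (hdist : ∀ N : ℕ, L < N → ∀ n : Fin N,
      (P N).map (W N n) = gammaMeasure m m) :
    ∀ ε : ℝ, 0 < ε →
      Tendsto
        (fun N : ℕ =>
          (P N) {ω | ε ≤
            |topSum L (fun n => W N n ω) / (((L : ℝ) / m) * Real.log N) - 1|})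
        atTop (nhds 0) := by
  intro ε hε
  have h' := stmt4_aux m hm L hL Ω P W hmeas hindep hdist (min ε (1/2))
    (lt_min hε (by norm_num)) (min_le_right _ _)
  have hle : ∀ N : ℕ,
      (P N) {ω | ε ≤
        |topSum L (fun n => W N n ω) / (((L : ℝ) / m) * Real.log N) - 1|}
      ≤ (P N) {ω | min ε (1/2) ≤
        |topSum L (fun n => W N n ω) / (((L : ℝ) / m) * Real.log N) - 1|} :=
    by
    intro N
    apply measure_mono
    intro ω hω
    simp only [Set.mem_setOf_eq] at hω ⊢
    exact le_trans (min_le_left _ _) hω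
  exact tendsto_of_tendsto_of_tendsto_of_le_of_le tendsto_const_nhds h'
    (fun N => zero_le) hle
end

section
/- Let m > 0 and let L ≥ 1 be a fixed integer. For N > L, let υ_N > 0 be the unique solution of G(m, m υ_N) = (L/N) · Γ(m), where G(s, x) := ∫_x^∞ t^{s−1} e^{−t} dt and Γ(m) = G(m, 0). Then m υ_N / log N → 1 as N → ∞. -/
open Filter

/-- The (real) upper incomplete gamma function `G(s, x) = ∫ₓ^∞ t^(s-1) e^(-t) dt`. -/
noncomputable def upperGamma (s x : ℝ) : ℝ :=
  ∫ t in Set.Ioi x, t ^ (s - 1) * Real.exp (-t)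

open MeasureTheory Set Real

lemma ug_integrable {m : ℝ} (hm : 0 < m) {a : ℝ} (ha : 0 ≤ a) :
    IntegrableOn (fun t : ℝ => t ^ (m - 1) * Real.exp (-t)) (Set.Ioi a) := by
  have h := Real.GammaIntegral_convergent hm
  have h2 : IntegrableOn (fun t : ℝ => t ^ (m - 1) * Real.exp (-t)) (Set.Ioi 0) :=
    h.congr_fun (fun x _ => mul_comm _ _) measurableSet_Ioi
  exact h2.mono_set (Set.Ioi_subset_Ioi ha)

lemma ug_nonneg_ae {m : ℝ} {a : ℝ} (ha : 0 ≤ a) :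
    0 ≤ᵐ[volume.restrict (Set.Ioi a)] fun t : ℝ => t ^ (m - 1) * Real.exp (-t) := by
  filter_upwards [ae_restrict_mem measurableSet_Ioi] with t ht
  have : (0:ℝ) < t := lt_of_le_of_lt ha ht
  positivity

lemma ug_antitone {m : ℝ} (hm : 0 < m) {a b : ℝ} (ha : 0 ≤ a) (hab : a ≤ b) :
    upperGamma m b ≤ upperGamma m a := by
  refine setIntegral_mono_set (ug_integrable hm ha) (ug_nonneg_ae ha) ?_
  exact Filter.Eventually.of_forall (fun x hx => Set.Ioi_subset_Ioi hab hx)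

lemma ug_eq_gamma {m : ℝ} (hm : 0 < m) : upperGamma m 0 = Real.Gamma m := by
  rw [Real.Gamma_eq_integral hm, upperGamma]
  exact setIntegral_congr_fun measurableSet_Ioi (fun x _ => mul_comm _ _)

lemma log_le_lin {t e : ℝ} (ht : 1 ≤ t) (he : 0 < e) : Real.log t ≤ e * t + 1 / e := by
  have ht0 : (0:ℝ) ≤ t := by linarith
  have hs : Real.sqrt t ^ 2 = t := Real.sq_sqrt ht0
  have hs1 : (1:ℝ) ≤ Real.sqrt t := by
    rw [show (1:ℝ) = Real.sqrt 1 by simp]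
    exact Real.sqrt_le_sqrt ht
  have hlog : Real.log t = 2 * Real.log (Real.sqrt t) := by
    rw [Real.log_sqrt ht0]; ring
  have h1 : Real.log (Real.sqrt t) ≤ Real.sqrt t - 1 :=
    Real.log_le_sub_one_of_pos (by positivity)
  have h2 : 2 * Real.sqrt t ≤ e * t + 1 / e := by
    have expand : e * (Real.sqrt t - 1/e)^2 = e * t - 2*Real.sqrt t + 1/e := by
      field_simp; linear_combination (e^2) * hs
    have hnn : 0 ≤ e * (Real.sqrt t - 1/e)^2 := mul_nonneg he.le (sq_nonneg _)
    linarith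
  linarith

lemma abs_mul_log_le {m δ t : ℝ} (ht : 1 ≤ t) (hδ : 0 < δ) :
    |(m - 1) * Real.log t| ≤ δ * t + (|m - 1| * (|m - 1| + 1)) / δ := by
  have hK : (0:ℝ) ≤ |m - 1| := abs_nonneg _
  have hlt : 0 ≤ Real.log t := Real.log_nonneg ht
  have heq : |(m - 1) * Real.log t| = |m - 1| * Real.log t := by
    rw [abs_mul, abs_of_nonneg hlt]
  rw [heq]
  set K := |m - 1| with hKdef
  have he : (0:ℝ) < δ / (K + 1) := by positivity
  have := log_le_lin ht he
  have h2 : K * Real.log t ≤ K * (δ / (K+1) * t + 1/(δ/(K+1))) :=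
    mul_le_mul_of_nonneg_left this hK
  have ht0 : (0:ℝ) ≤ t := by linarith
  have h3 : K * (δ / (K+1) * t) ≤ δ * t := by
    have hfrac : K / (K + 1) ≤ 1 := by
      rw [div_le_one (by positivity)]; linarith
    have hc : K * (δ / (K+1)) ≤ δ := by
      calc K * (δ/(K+1)) = δ * (K/(K+1)) := by ring
        _ ≤ δ * 1 := mul_le_mul_of_nonneg_left hfrac hδ.le
        _ = δ := mul_one δ
    calc K * (δ/(K+1) * t) = (K * (δ/(K+1))) * t := by ring
      _ ≤ δ * t := mul_le_mul_of_nonneg_right hc ht0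
  have h4 : K * (1/(δ/(K+1))) = K * (K+1) / δ := by
    field_simp
  nlinarith

lemma rpow_le_exp {m δ t : ℝ} (ht : 1 ≤ t) (hδ : 0 < δ) :
    t ^ (m - 1) ≤ Real.exp (δ * t + (|m - 1| * (|m - 1| + 1)) / δ) := by
  have ht0 : (0:ℝ) < t := by linarith
  rw [Real.rpow_def_of_pos ht0]
  apply Real.exp_le_exp.mpr
  have := abs_mul_log_le (m := m) ht hδ
  calc Real.log t * (m - 1) = (m - 1) * Real.log t := by ring
    _ ≤ |(m - 1) * Real.log t| := le_abs_self _
    _ ≤ _ := this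

lemma exp_le_rpow {m δ t : ℝ} (ht : 1 ≤ t) (hδ : 0 < δ) :
    Real.exp (-(δ * t + (|m - 1| * (|m - 1| + 1)) / δ)) ≤ t ^ (m - 1) := by
  have ht0 : (0:ℝ) < t := by linarith
  rw [Real.rpow_def_of_pos ht0]
  apply Real.exp_le_exp.mpr
  have := abs_mul_log_le (m := m) ht hδ
  have h := neg_abs_le ((m - 1) * Real.log t)
  calc -(δ * t + (|m-1| * (|m-1|+1))/δ) ≤ -|(m - 1) * Real.log t| := by linarith
    _ ≤ (m - 1) * Real.log t := h
    _ = Real.log t * (m - 1) := by ring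

lemma integral_exp_neg_mul_Ioi {b : ℝ} (hb : 0 < b) (a : ℝ) :
    ∫ x in Set.Ioi a, Real.exp (-(b * x)) = Real.exp (-(b * a)) / b := by
  have h := MeasureTheory.integral_comp_mul_left_Ioi (fun x => Real.exp (-x)) a hb
  simp only [smul_eq_mul] at h
  rw [h, integral_exp_neg_Ioi, inv_mul_eq_div]

lemma ug_upper {m δ a : ℝ} (hm : 0 < m) (hδ : 0 < δ) (hδ1 : δ < 1) (ha : 1 ≤ a) :
    upperGamma m a ≤
      Real.exp ((|m - 1| * (|m - 1| + 1)) / δ) * (Real.exp (-((1-δ) * a)) / (1-δ)) := by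
  set B := (|m - 1| * (|m - 1| + 1)) / δ with hB
  have ha0 : (0:ℝ) ≤ a := by linarith
  have key : upperGamma m a ≤ ∫ t in Set.Ioi a, Real.exp B * Real.exp (-((1-δ) * t)) := by
    apply setIntegral_mono_on (ug_integrable hm ha0) _ measurableSet_Ioi
    · intro t ht
      have ht1 : 1 ≤ t := le_of_lt (lt_of_le_of_lt ha ht)
      have h1 : t ^ (m - 1) ≤ Real.exp (δ * t + B) := rpow_le_exp ht1 hδ
      calc t ^ (m - 1) * Real.exp (-t) ≤ Real.exp (δ * t + B) * Real.exp (-t) :=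
            mul_le_mul_of_nonneg_right h1 (Real.exp_pos _).le
        _ = Real.exp B * Real.exp (-((1-δ) * t)) := by
            rw [← Real.exp_add, ← Real.exp_add]; ring_nf
    · apply Integrable.const_mul
      have := exp_neg_integrableOn_Ioi a (show (0:ℝ) < 1 - δ by linarith)
      exact this.congr_fun (fun x _ => by ring_nf) measurableSet_Ioi
  rw [MeasureTheory.integral_const_mul, integral_exp_neg_mul_Ioi (show (0:ℝ) < 1-δ by linarith)] at key
  exact key

lemma ug_lower {m δ a : ℝ} (hm : 0 < m) (hδ : 0 < δ) (ha : 1 ≤ a) :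
    Real.exp (-((1+δ) * (a+1) + (|m - 1| * (|m - 1| + 1)) / δ)) ≤ upperGamma m a := by
  set B := (|m - 1| * (|m - 1| + 1)) / δ with hB
  have ha0 : (0:ℝ) ≤ a := by linarith
  have hsub : Set.Ioc a (a+1) ⊆ Set.Ioi a := Set.Ioc_subset_Ioi_self
  have hint : IntegrableOn (fun t : ℝ => t ^ (m - 1) * Real.exp (-t)) (Set.Ioc a (a+1)) :=
    (ug_integrable hm ha0).mono_set hsub
  have step1 : ∫ t in Set.Ioc a (a+1), Real.exp (-((1+δ) * (a+1) + B)) ≤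
      ∫ t in Set.Ioc a (a+1), t ^ (m - 1) * Real.exp (-t) := by
    apply setIntegral_mono_on (integrableOn_const measure_Ioc_lt_top.ne) hint
      measurableSet_Ioc
    intro t ht
    have ht1 : 1 ≤ t := le_of_lt (lt_of_le_of_lt ha ht.1)
    have hta : t ≤ a + 1 := ht.2
    have h1 : Real.exp (-(δ * t + B)) ≤ t ^ (m - 1) := exp_le_rpow ht1 hδ
    have h2 : Real.exp (-((1+δ) * (a+1) + B)) ≤ Real.exp (-(δ * t + B)) * Real.exp (-t) := by
      rw [← Real.exp_add]
      apply Real.exp_le_exp.mpr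
      nlinarith
    calc Real.exp (-((1+δ) * (a+1) + B)) ≤ Real.exp (-(δ * t + B)) * Real.exp (-t) := h2
      _ ≤ t ^ (m - 1) * Real.exp (-t) :=
          mul_le_mul_of_nonneg_right h1 (Real.exp_pos _).le
  have step2 : ∫ t in Set.Ioc a (a+1), t ^ (m - 1) * Real.exp (-t) ≤ upperGamma m a :=
    setIntegral_mono_set (ug_integrable hm ha0) (ug_nonneg_ae ha0)
      (Filter.Eventually.of_forall (fun x hx => hsub hx))
  have hvol : ∫ t in Set.Ioc a (a+1), Real.exp (-((1+δ) * (a+1) + B)) =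
      Real.exp (-((1+δ) * (a+1) + B)) := by
    rw [setIntegral_const, Real.volume_real_Ioc, show a + 1 - a = (1:ℝ) by ring]
    simp
  linarith [hvol ▸ step1]

theorem stmt13 (m : ℝ) (hm : 0 < m) (L : ℕ) (hL : 1 ≤ L)
    (υ : ℕ → ℝ)
    (hυ : ∀ N : ℕ, L < N →
      0 < υ N ∧ upperGamma m (m * υ N) = ((L : ℝ) / N) * upperGamma m 0) :
    Tendsto (fun N : ℕ => m * υ N / Real.log N) atTop (nhds 1) := by
  have hΓ : 0 < upperGamma m 0 := by
    rw [ug_eq_gamma hm]; exact Real.Gamma_pos_of_pos hm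
  have hL0 : (0:ℝ) < L := by exact_mod_cast hL
  rw [Metric.tendsto_atTop]
  intro ε hε
  set e := min (ε/2) (4⁻¹ : ℝ) with he_def
  have he0 : 0 < e := lt_min (by linarith) (by norm_num)
  have he2 : e ≤ 1/4 := le_trans (min_le_right _ _) (by norm_num)
  have heε : e < ε := lt_of_le_of_lt (min_le_left _ _) (by linarith)
  set δ := e/2 with hδdef
  have hδ0 : 0 < δ := by rw [hδdef]; positivity
  have hδ1 : δ < 1 := by rw [hδdef]; linarith
  set B := (|m - 1| * (|m - 1| + 1)) / δ with hBdef
  have hB0 : 0 ≤ B := by rw [hBdef]; positivity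
  set c₁ := (1-δ)*(1+e) - 1 with hc1
  set c₂ := 1 - (1+δ)*(1-e) with hc2
  have hc10 : 0 < c₁ := by rw [hc1, hδdef]; nlinarith
  have hc20 : 0 < c₂ := by rw [hc2, hδdef]; nlinarith
  have hΓ' : (0:ℝ) < (L:ℝ) * upperGamma m 0 := mul_pos hL0 hΓ
  have hlog : Tendsto (fun N : ℕ => Real.log N) atTop atTop :=
    Real.tendsto_log_atTop.comp tendsto_natCast_atTop_atTop
  have key : ∀ᶠ N : ℕ in atTop, |m * υ N / Real.log N - 1| ≤ e := by
    filter_upwards [eventually_gt_atTop L,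
      hlog.eventually_ge_atTop 2,
      hlog.eventually_gt_atTop ((B - Real.log ((1-δ)*((L:ℝ)*upperGamma m 0)))/c₁),
      hlog.eventually_gt_atTop ((Real.log ((L:ℝ)*upperGamma m 0) + B + (1+δ))/c₂)]
      with N hN hs2 hs3 hs4
    set s := Real.log (N:ℝ) with hsdef
    obtain ⟨hx0, heq⟩ := hυ N hN
    have hxpos : 0 < m * υ N := mul_pos hm hx0
    set x := m * υ N with hx
    have hNpos : (0:ℝ) < (N:ℝ) := by
      have : (L:ℝ) < (N:ℝ) := by exact_mod_cast hN
      linarith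
    have hexp : Real.exp (-s) = ((N:ℝ))⁻¹ := by
      rw [Real.exp_neg, Real.exp_log hNpos]
    have heqG : upperGamma m x = (L:ℝ) * upperGamma m 0 * Real.exp (-s) := by
      rw [heq, hexp]; ring
    -- upper bound : x < (1+e) * s
    have ha1 : (1:ℝ) ≤ (1+e)*s := by
      have h := mul_le_mul_of_nonneg_right (show (1:ℝ) ≤ 1+e by linarith)
        (show (0:ℝ) ≤ s by linarith)
      linarith
    have hupper := ug_upper hm hδ0 hδ1 ha1
    have h1δ : (0:ℝ) < 1 - δ := by linarith
    have hstep : Real.exp B * (Real.exp (-((1-δ)*((1+e)*s)))/(1-δ)) <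
        (L:ℝ) * upperGamma m 0 * Real.exp (-s) := by
      have h1 : Real.exp (B - (1-δ)*((1+e)*s) + s) < (1-δ)*((L:ℝ)*upperGamma m 0) := by
        rw [← Real.exp_log (mul_pos h1δ hΓ')]
        apply Real.exp_lt_exp.mpr
        have h3 := (div_lt_iff₀ hc10).mp hs3
        have hexpand : (1-δ)*((1+e)*s) = (c₁+1)*s := by rw [hc1]; ring
        linarith
      have h2 : Real.exp (B - (1-δ)*((1+e)*s)) <
          (1-δ)*((L:ℝ)*upperGamma m 0) * Real.exp (-s) := by
        have := mul_lt_mul_of_pos_right h1 (Real.exp_pos (-s))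
        rwa [← Real.exp_add,
          show B - (1-δ)*((1+e)*s) + s + -s = B - (1-δ)*((1+e)*s) by ring] at this
      rw [mul_div_assoc', ← Real.exp_add, ← sub_eq_add_neg, div_lt_iff₀ h1δ]
      calc Real.exp (B - (1-δ)*((1+e)*s))
          < (1-δ)*((L:ℝ)*upperGamma m 0) * Real.exp (-s) := h2
        _ = (L:ℝ) * upperGamma m 0 * Real.exp (-s) * (1-δ) := by ring
    have hxa : x < (1+e)*s := by
      by_contra hcon
      push_neg at hcon
      have hmono := ug_antitone hm (by linarith : (0:ℝ) ≤ (1+e)*s) hcon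
      rw [heqG] at hmono
      linarith
    -- lower bound : (1-e) * s < x
    have hb1 : (1:ℝ) ≤ (1-e)*s := by
      have h := mul_le_mul_of_nonneg_right (show (3/4:ℝ) ≤ 1-e by linarith)
        (show (0:ℝ) ≤ s by linarith)
      linarith
    have hlower := ug_lower hm hδ0 hb1
    have hstep2 : (L:ℝ) * upperGamma m 0 * Real.exp (-s) <
        Real.exp (-((1+δ)*((1-e)*s+1) + B)) := by
      rw [show (L:ℝ) * upperGamma m 0 * Real.exp (-s)
          = Real.exp (Real.log ((L:ℝ)*upperGamma m 0) + -s) from by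
        rw [Real.exp_add, Real.exp_log hΓ']]
      apply Real.exp_lt_exp.mpr
      have h4 := (div_lt_iff₀ hc20).mp hs4
      have hexpand : (1+δ)*((1-e)*s+1) = (1-c₂)*s + (1+δ) := by rw [hc2]; ring
      linarith
    have hbx : (1-e)*s < x := by
      by_contra hcon
      push_neg at hcon
      have hmono := ug_antitone hm hxpos.le hcon
      rw [heqG] at hmono
      linarith
    have hs0 : (0:ℝ) < s := by linarith
    have h5 : x / s < 1 + e := (div_lt_iff₀ hs0).mpr (by linarith)
    have h6 : 1 - e < x / s := (lt_div_iff₀ hs0).mpr (by linarith)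
    rw [abs_le]
    constructor <;> [linarith; linarith]
  rw [eventually_atTop] at key
  obtain ⟨N₀, hN₀⟩ := key
  refine ⟨N₀, fun n hn => ?_⟩
  have := hN₀ n hn
  rw [Real.dist_eq]
  exact lt_of_le_of_lt this heε
end
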